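/- Let (N, 𝐠) be a Lorentzian manifold carrying two Killing fields Y and Z, let U ⊂ N be a spacelike hypersurface with future unit normal n, and write Y = 2f_Y n + X_Y and Z = 2f_Z n + X_Z along U with X_Y, X_Z tangential. Then the commutator W = [Y, Z] decomposes along U as W = 2f n + X with f = X_Y(f_Z) − X_Z(f_Y) and X = [X_Y, X_Z] + 4(f_Y ∇f_Z − f_Z ∇f_Y), where ∇ is the gradient in the induced metric on U. -/

import Mathlib

open scoped Matrix

noncomputable section

/-- Points/vectors of the coordinate chart `ℝᵐ`. -/
abbrev Vec (m : ℕ) := Fin m → ℝ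

variable {m : ℕ}

/-- The `i`-th standard coordinate vector field `∂/∂xⁱ`. -/
def ebasis (i : Fin m) : Vec m := Pi.single i 1

/-- Partial derivative `∂ᵢ f` of a scalar function. -/
def pd (f : Vec m → ℝ) (i : Fin m) (x : Vec m) : ℝ := fderiv ℝ f x (ebasis i)

/-- The metric `g` (given by its coordinate matrix) applied to two vectors. -/
def apg (g : Vec m → Matrix (Fin m) (Fin m) ℝ) (x v w : Vec m) : ℝ := v ⬝ᵥ (g x).mulVec w

/-- Coordinate formula for the Lie derivative of the metric `g` along the vector field `X`:
`(L_X g)_{ij} = X^l ∂_l g_{ij} + g_{lj} ∂_i X^l + g_{il} ∂_j X^l`. -/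
def lieD (X : Vec m → Vec m) (g : Vec m → Matrix (Fin m) (Fin m) ℝ) (x : Vec m)
    (i j : Fin m) : ℝ :=
  fderiv ℝ (fun y => g y i j) x (X x)
    + ∑ l, g x l j * fderiv ℝ X x (ebasis i) l
    + ∑ l, g x i l * fderiv ℝ X x (ebasis j) l

/-- Lie bracket of vector fields, in coordinates: `[X,Y] = DY·X − DX·Y`. -/
def lieBkt (X Y : Vec m → Vec m) (x : Vec m) : Vec m :=
  fderiv ℝ Y x (X x) - fderiv ℝ X x (Y x)

variable {n : ℕ}

/-- Embedding of the slice `U = {x⁰ = 0}` into the spacetime chart `ℝ^{n+1}`. -/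
def emb (y : Vec n) : Vec (n + 1) := Fin.cons 0 y

/-- Embedding of a slice-tangential vector into the spacetime chart (0 time component). -/
def embV (v : Vec n) : Vec (n + 1) := Fin.cons 0 v

/-- Induced (first fundamental form) metric on the slice `{x⁰ = 0}`. -/
def indMetric (G : Vec (n + 1) → Matrix (Fin (n + 1)) (Fin (n + 1)) ℝ)
    (y : Vec n) : Matrix (Fin n) (Fin n) ℝ :=
  Matrix.of fun i j => G (emb y) i.succ j.succ

/-- Second fundamental form of the slice with respect to the future unit normal `nv`:
`k_{ij} = ½ (L_{nv} G)_{ij}` (tangential components), which for the Levi-Civita connection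
equals `½(G(∇_i nv, e_j) + G(e_i, ∇_j nv))`. -/
def secondFF (G : Vec (n + 1) → Matrix (Fin (n + 1)) (Fin (n + 1)) ℝ)
    (nv : Vec (n + 1) → Vec (n + 1)) (y : Vec n) (i j : Fin n) : ℝ :=
  (1 / 2) * lieD nv G (emb y) i.succ j.succ

/-- `ḡ`-trace of the second fundamental form. -/
def trSecondFF (G : Vec (n + 1) → Matrix (Fin (n + 1)) (Fin (n + 1)) ℝ)
    (nv : Vec (n + 1) → Vec (n + 1)) (y : Vec n) : ℝ :=
  ∑ i, ∑ j, (indMetric G y)⁻¹ i j * secondFF G nv y i j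

/-- Conjugate momentum tensor (with indices lowered by `ḡ`):
`π_{ij} = k_{ij} − (tr_{ḡ} k) ḡ_{ij}`, the inverse of
`k_{ij} = ḡ_{il}ḡ_{jm}π^{lm} − (tr_{ḡ}π)/(n−1) ḡ_{ij}`. -/
def momLow (G : Vec (n + 1) → Matrix (Fin (n + 1)) (Fin (n + 1)) ℝ)
    (nv : Vec (n + 1) → Vec (n + 1)) (y : Vec n) (i j : Fin n) : ℝ :=
  secondFF G nv y i j - trSecondFF G nv y * indMetric G y i j

/-- `ḡ`-trace of the conjugate momentum tensor: `tr_{ḡ} π = ḡ^{ij} π_{ij}`. -/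
def trMom (G : Vec (n + 1) → Matrix (Fin (n + 1)) (Fin (n + 1)) ℝ)
    (nv : Vec (n + 1) → Vec (n + 1)) (y : Vec n) : ℝ :=
  ∑ i, ∑ j, (indMetric G y)⁻¹ i j * momLow G nv y i j

/-- `ḡ`-gradient of a function on the slice. -/
def gradSlice (G : Vec (n + 1) → Matrix (Fin (n + 1)) (Fin (n + 1)) ℝ)
    (h : Vec n → ℝ) (y : Vec n) : Vec n :=
  (indMetric G y)⁻¹.mulVec fun i => fderiv ℝ h y (Pi.single i 1)


open scoped Matrix

lemma apg_expand {m : ℕ} (g : Vec m → Matrix (Fin m) (Fin m) ℝ) (x v w : Vec m) :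
    apg g x v w = ∑ i, ∑ j, v i * (g x i j * w j) := by
  unfold apg Matrix.mulVec dotProduct
  simp [Finset.mul_sum]

lemma fderiv_apg_pt {m : ℕ} (g : Vec m → Matrix (Fin m) (Fin m) ℝ) (x : Vec m)
    (hg : ∀ i j, DifferentiableAt ℝ (fun x => g x i j) x) (u v w : Vec m) :
    fderiv ℝ (fun x => apg g x u v) x w
      = ∑ i, ∑ j, u i * (fderiv ℝ (fun x => g x i j) x w * v j) := by
  have h : HasFDerivAt (fun x => apg g x u v)
      (∑ i, ∑ j, u i • ((v j) • fderiv ℝ (fun x => g x i j) x)) x := by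
    have e : (fun x => apg g x u v) = fun x => ∑ i, ∑ j, u i * (g x i j * v j) := by
      funext z; exact apg_expand g z u v
    rw [e]
    apply HasFDerivAt.fun_sum; intro i _
    apply HasFDerivAt.fun_sum; intro j _
    exact (((hg i j).hasFDerivAt.mul_const (v j)).const_mul (u i))
  rw [h.fderiv]
  simp only [ContinuousLinearMap.sum_apply, ContinuousLinearMap.smul_apply, smul_eq_mul]
  refine Finset.sum_congr rfl fun i _ => Finset.sum_congr rfl fun j _ => by ring

lemma fderiv_apg_comp {k m : ℕ} (g : Vec m → Matrix (Fin m) (Fin m) ℝ)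
    (F A B : Vec k → Vec m) (q : Vec k)
    (hg : ∀ i j, DifferentiableAt ℝ (fun x => g x i j) (F q))
    (hF : DifferentiableAt ℝ F q) (hA : DifferentiableAt ℝ A q)
    (hB : DifferentiableAt ℝ B q) (w : Vec k) :
    fderiv ℝ (fun z => apg g (F z) (A z) (B z)) q w
      = fderiv ℝ (fun x => apg g x (A q) (B q)) (F q) (fderiv ℝ F q w)
        + apg g (F q) (fderiv ℝ A q w) (B q)
        + apg g (F q) (A q) (fderiv ℝ B q w) := by
  have hsum : HasFDerivAt (fun z => apg g (F z) (A z) (B z))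
      (∑ i, ∑ j, (A q i • ((g (F q) i j) •
            ((ContinuousLinearMap.proj j).comp (fderiv ℝ B q))
          + B q j • ((fderiv ℝ (fun x => g x i j) (F q)).comp (fderiv ℝ F q)))
        + (g (F q) i j * B q j) • ((ContinuousLinearMap.proj i).comp (fderiv ℝ A q)))) q := by
    have e : (fun z => apg g (F z) (A z) (B z))
        = fun z => ∑ i, ∑ j, A z i * (g (F z) i j * B z j) := by
      funext z; exact apg_expand g (F z) (A z) (B z)
    rw [e]
    apply HasFDerivAt.fun_sum; intro i _
    apply HasFDerivAt.fun_sum; intro j _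
    exact ((ContinuousLinearMap.proj i).hasFDerivAt.comp q hA.hasFDerivAt).mul
      (((hg i j).hasFDerivAt.comp q hF.hasFDerivAt).mul
        (show HasFDerivAt (fun z => B z j) ((ContinuousLinearMap.proj j).comp (fderiv ℝ B q)) q from
          (ContinuousLinearMap.proj (R := ℝ) (φ := fun _ : Fin m => ℝ) j).hasFDerivAt.comp q hB.hasFDerivAt))
  rw [hsum.fderiv, fderiv_apg_pt g (F q) hg (A q) (B q) (fderiv ℝ F q w),
    apg_expand g (F q) (fderiv ℝ A q w) (B q), apg_expand g (F q) (A q) (fderiv ℝ B q w)]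
  simp only [ContinuousLinearMap.sum_apply, ContinuousLinearMap.add_apply,
    ContinuousLinearMap.smul_apply, ContinuousLinearMap.coe_comp', Function.comp_apply,
    ContinuousLinearMap.proj_apply, smul_eq_mul]
  rw [← Finset.sum_add_distrib, ← Finset.sum_add_distrib]
  refine Finset.sum_congr rfl fun i _ => ?_
  rw [← Finset.sum_add_distrib, ← Finset.sum_add_distrib]
  refine Finset.sum_congr rfl fun j _ => by ring

open scoped Matrix
section
variable {m : ℕ} (g : Vec m → Matrix (Fin m) (Fin m) ℝ) (x : Vec m)

lemma apg_smul_left (c : ℝ) (a v : Vec m) : apg g x (c • a) v = c * apg g x a v := by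
  unfold apg; rw [smul_dotProduct]; rfl

lemma apg_add_left (a b v : Vec m) : apg g x (a + b) v = apg g x a v + apg g x b v := by
  unfold apg; rw [add_dotProduct]

lemma apg_smul_right (c : ℝ) (a v : Vec m) : apg g x a (c • v) = c * apg g x a v := by
  unfold apg; rw [Matrix.mulVec_smul, dotProduct_smul]; rfl

lemma apg_add_right (a v w : Vec m) : apg g x a (v + w) = apg g x a v + apg g x a w := by
  unfold apg; rw [Matrix.mulVec_add, dotProduct_add]

lemma apg_sub_left (a b v : Vec m) : apg g x (a - b) v = apg g x a v - apg g x b v := by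
  unfold apg; rw [sub_dotProduct]

lemma apg_sub_right (a v w : Vec m) : apg g x a (v - w) = apg g x a v - apg g x a w := by
  unfold apg; rw [Matrix.mulVec_sub, dotProduct_sub]

lemma apg_sum_smul_left {ι : Type*} [Fintype ι] (c : ι → ℝ) (a : ι → Vec m) (v : Vec m) :
    apg g x (∑ i, c i • a i) v = ∑ i, c i * apg g x (a i) v := by
  rw [apg_expand]
  simp only [Finset.sum_apply, Pi.smul_apply, smul_eq_mul, Finset.sum_mul, apg_expand,
    Finset.mul_sum]
  rw [show (∑ k, ∑ j, ∑ i, c i * a i k * (g x k j * v j))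
      = ∑ k, ∑ i, ∑ j, c i * a i k * (g x k j * v j) from
    Finset.sum_congr rfl fun k _ => Finset.sum_comm, Finset.sum_comm]
  exact Finset.sum_congr rfl fun i _ => Finset.sum_congr rfl fun k _ =>
    Finset.sum_congr rfl fun j _ => by ring

lemma apg_sum_smul_right {ι : Type*} [Fintype ι] (c : ι → ℝ) (a : ι → Vec m) (v : Vec m) :
    apg g x v (∑ i, c i • a i) = ∑ i, c i * apg g x v (a i) := by
  rw [apg_expand]
  simp only [Finset.sum_apply, Pi.smul_apply, smul_eq_mul, Finset.mul_sum, apg_expand]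
  rw [show (∑ k, ∑ j, ∑ i, v k * (g x k j * (c i * a i j)))
      = ∑ k, ∑ i, ∑ j, v k * (g x k j * (c i * a i j)) from
    Finset.sum_congr rfl fun k _ => Finset.sum_comm, Finset.sum_comm]
  exact Finset.sum_congr rfl fun i _ => Finset.sum_congr rfl fun k _ =>
    Finset.sum_congr rfl fun j _ => by ring

lemma apg_symm (hs : (g x).IsSymm) (v w : Vec m) : apg g x v w = apg g x w v := by
  rw [apg_expand, apg_expand, Finset.sum_comm]
  refine Finset.sum_congr rfl fun i _ => Finset.sum_congr rfl fun j _ => ?_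
  have e : g x j i = g x i j := congrFun (congrFun hs i) j
  rw [e]; ring

lemma clm_basis {E : Type*} [NormedAddCommGroup E] [NormedSpace ℝ E]
    (L : Vec m →L[ℝ] E) (u : Vec m) : L u = ∑ i, u i • L (ebasis i) := by
  have h : u = ∑ i, u i • ebasis i := by funext j; simp [ebasis, Pi.single_apply]
  conv_lhs => rw [h]
  simp

lemma killing_contract (Zf : Vec m → Vec m)
    (hg : ∀ i j, DifferentiableAt ℝ (fun x' => g x' i j) x)
    (hK : ∀ μ ν, lieD Zf g x μ ν = 0) (u v : Vec m) :
    fderiv ℝ (fun x' => apg g x' u v) x (Zf x)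
      + apg g x (fderiv ℝ Zf x u) v + apg g x u (fderiv ℝ Zf x v) = 0 := by
  have h0 : ∑ μ, ∑ ν, u μ * (v ν * lieD Zf g x μ ν) = 0 := by simp [hK]
  have hA : fderiv ℝ (fun x' => apg g x' u v) x (Zf x)
      = ∑ μ, ∑ ν, u μ * (v ν * fderiv ℝ (fun y => g y μ ν) x (Zf x)) := by
    rw [fderiv_apg_pt g x hg u v (Zf x)]
    exact Finset.sum_congr rfl fun μ _ => Finset.sum_congr rfl fun ν _ => by ring
  have hB : apg g x (fderiv ℝ Zf x u) v
      = ∑ μ, ∑ ν, u μ * (v ν * ∑ l, g x l ν * fderiv ℝ Zf x (ebasis μ) l) := by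
    rw [clm_basis (fderiv ℝ Zf x) u, apg_sum_smul_left]
    refine Finset.sum_congr rfl fun μ _ => ?_
    rw [apg_expand, Finset.sum_comm]
    simp only [Finset.mul_sum]
    refine Finset.sum_congr rfl fun ν _ => Finset.sum_congr rfl fun l _ => by ring
  have hC : apg g x u (fderiv ℝ Zf x v)
      = ∑ μ, ∑ ν, u μ * (v ν * ∑ l, g x μ l * fderiv ℝ Zf x (ebasis ν) l) := by
    rw [clm_basis (fderiv ℝ Zf x) v, apg_sum_smul_right]
    conv_rhs => rw [Finset.sum_comm]
    refine Finset.sum_congr rfl fun ν _ => ?_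
    rw [apg_expand]
    simp only [Finset.mul_sum]
    refine Finset.sum_congr rfl fun μ _ => Finset.sum_congr rfl fun l _ => by ring
  rw [hA, hB, hC, ← h0, ← Finset.sum_add_distrib, ← Finset.sum_add_distrib]
  refine Finset.sum_congr rfl fun μ _ => ?_
  rw [← Finset.sum_add_distrib, ← Finset.sum_add_distrib]
  refine Finset.sum_congr rfl fun ν _ => ?_
  unfold lieD
  ring
end

section
variable {n : ℕ}

/-- `embV` as a continuous linear map. -/
def embCLM (n : ℕ) : Vec n →L[ℝ] Vec (n + 1) :=
  LinearMap.toContinuousLinearMap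
    { toFun := embV
      map_add' := fun a b => by
        funext μ; refine Fin.cases ?_ (fun i => ?_) μ <;> simp [embV]
      map_smul' := fun c a => by
        funext μ; refine Fin.cases ?_ (fun i => ?_) μ <;> simp [embV] }

lemma embCLM_apply (v : Vec n) : embCLM n v = embV v := rfl

lemma emb_eq (y : Vec n) : emb y = embCLM n y := rfl

lemma embV_smul (c : ℝ) (v : Vec n) : embV (c • v) = c • embV v := by
  funext μ; refine Fin.cases ?_ (fun i => ?_) μ <;> simp [embV]

lemma embV_add (v w : Vec n) : embV (v + w) = embV v + embV w := by
  funext μ; refine Fin.cases ?_ (fun i => ?_) μ <;> simp [embV]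

lemma embV_sub (v w : Vec n) : embV (v - w) = embV v - embV w := by
  funext μ; refine Fin.cases ?_ (fun i => ?_) μ <;> simp [embV]

lemma embV_sum {ι : Type*} [Fintype ι] (a : ι → Vec n) :
    embV (∑ i, a i) = ∑ i, embV (a i) := map_sum (embCLM n).toLinearMap a Finset.univ

lemma embV_basis_sum (w : Vec n) : embV w = ∑ i, w i • embV (ebasis i) := by
  have h : w = ∑ i, w i • ebasis i := by funext j; simp [ebasis, Pi.single_apply]
  conv_lhs => rw [h]
  rw [show embV = ⇑(embCLM n) from rfl]
  simp

lemma apg_emb (G : Vec (n + 1) → Matrix (Fin (n + 1)) (Fin (n + 1)) ℝ)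
    (y : Vec n) (u v : Vec n) :
    apg G (emb y) (embV u) (embV v) = u ⬝ᵥ (indMetric G y).mulVec v := by
  rw [apg_expand]
  unfold dotProduct Matrix.mulVec dotProduct indMetric
  rw [Fin.sum_univ_succ]
  simp only [embV, Fin.cons_zero, Fin.cons_succ, zero_mul, Finset.sum_const_zero, zero_add,
    Finset.mul_sum, Matrix.of_apply]
  refine Finset.sum_congr rfl fun i _ => ?_
  rw [Fin.sum_univ_succ]
  simp [Fin.cons_zero, Fin.cons_succ]

lemma normal_ext (G : Vec (n + 1) → Matrix (Fin (n + 1)) (Fin (n + 1)) ℝ)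
    (nv : Vec (n + 1) → Vec (n + 1)) (y : Vec n)
    (hnormal : ∀ i : Fin n, apg G (emb y) (nv (emb y)) (embV (Pi.single i 1)) = 0)
    (w : Vec n) : apg G (emb y) (nv (emb y)) (embV w) = 0 := by
  rw [embV_basis_sum, apg_sum_smul_right]
  simp only [show ∀ i, embV (ebasis i) = embV (Pi.single i 1) from fun _ => rfl, hnormal,
    mul_zero, Finset.sum_const_zero]

lemma nondeg (G : Vec (n + 1) → Matrix (Fin (n + 1)) (Fin (n + 1)) ℝ) (y : Vec n)
    (hsym : (G (emb y)).IsSymm) (N : Vec (n + 1))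
    (hu : apg G (emb y) N N = -1)
    (hn : ∀ w, apg G (emb y) N (embV w) = 0)
    (hN0 : N 0 ≠ 0) (hpd : (indMetric G y).PosDef)
    (v : Vec (n + 1)) (h1 : apg G (emb y) v N = 0)
    (h2 : ∀ i : Fin n, apg G (emb y) v (embV (ebasis i)) = 0) : v = 0 := by
  set c : ℝ := v 0 / N 0 with hc
  set w : Vec n := fun i => (v - c • N) (Fin.succ i) with hw
  have hv : v = c • N + embV w := by
    funext μ
    refine Fin.cases ?_ (fun i => ?_) μ
    · simp [embV, hw, hc, div_mul_cancel₀ _ hN0]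
    · simp [embV, hw]
  have hc0 : c = 0 := by
    have := h1
    rw [hv, apg_add_left, apg_smul_left, hu, apg_symm G _ hsym (embV w) N, hn w] at this
    linarith
  have hw0 : w = 0 := by
    by_contra hne
    have hpos := hpd.dotProduct_mulVec_pos hne
    rw [star_trivial] at hpos
    have hcomp : ∀ i, ∑ k, w k * indMetric G y k i = 0 := by
      intro i
      have := h2 i
      rw [hv, hc0, zero_smul, zero_add, apg_emb] at this
      rw [← this]
      unfold dotProduct Matrix.mulVec dotProduct
      refine Finset.sum_congr rfl fun k _ => ?_
      simp [ebasis, Pi.single_apply, Finset.mul_sum, mul_ite]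
    have hzero : w ⬝ᵥ (indMetric G y).mulVec w = 0 := by
      unfold dotProduct Matrix.mulVec dotProduct
      simp only [Finset.mul_sum]
      rw [Finset.sum_comm]
      calc (∑ i, ∑ k, w k * (indMetric G y k i * w i))
          = ∑ i, (∑ k, w k * indMetric G y k i) * w i := by
            refine Finset.sum_congr rfl fun i _ => ?_
            rw [Finset.sum_mul]
            exact Finset.sum_congr rfl fun k _ => by ring
        _ = 0 := by simp [hcomp]
    rw [hzero] at hpos; exact lt_irrefl 0 hpos
  rw [hv, hc0, hw0, zero_smul, zero_add]
  funext μ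
  refine Fin.cases ?_ (fun i => ?_) μ <;> simp [embV]
end

section
variable {n : ℕ}

lemma indMetric_symm (G : Vec (n + 1) → Matrix (Fin (n + 1)) (Fin (n + 1)) ℝ)
    (y : Vec n) (hsym : (G (emb y)).IsSymm) (l i : Fin n) :
    indMetric G y l i = indMetric G y i l := by
  unfold indMetric
  exact congrFun (congrFun hsym i.succ) l.succ

lemma grad_pair (G : Vec (n + 1) → Matrix (Fin (n + 1)) (Fin (n + 1)) ℝ) (y : Vec n)
    (hsym : (G (emb y)).IsSymm) (hpd : (indMetric G y).PosDef) (h : Vec n → ℝ) (i : Fin n) :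
    apg G (emb y) (embV (gradSlice G h y)) (embV (ebasis i)) = fderiv ℝ h y (ebasis i) := by
  rw [apg_emb]
  have hdet : IsUnit (indMetric G y).det := (Matrix.PosDef.det_pos hpd).ne'.isUnit
  have hinv : indMetric G y * (indMetric G y)⁻¹ = 1 := Matrix.mul_nonsing_inv _ hdet
  have key : ∀ j, (∑ l, indMetric G y i l * (indMetric G y)⁻¹ l j)
      = (1 : Matrix (Fin n) (Fin n) ℝ) i j := by
    intro j; rw [← Matrix.mul_apply, hinv]
  unfold gradSlice
  unfold dotProduct Matrix.mulVec dotProduct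
  simp only [ebasis, Pi.single_apply, mul_ite, mul_one, mul_zero, Finset.sum_ite_eq',
    Finset.mem_univ, if_true]
  calc ∑ l, (∑ j, (indMetric G y)⁻¹ l j * fderiv ℝ h y (Pi.single j 1)) * indMetric G y l i
      = ∑ j, (∑ l, indMetric G y i l * (indMetric G y)⁻¹ l j) * fderiv ℝ h y (Pi.single j 1) := by
        simp only [Finset.sum_mul]
        rw [Finset.sum_comm]
        refine Finset.sum_congr rfl fun j _ => Finset.sum_congr rfl fun l _ => ?_
        rw [indMetric_symm G y hsym l i]; ring
    _ = fderiv ℝ h y (Pi.single i 1) := by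
        simp only [key, Matrix.one_apply, ite_mul, one_mul, zero_mul]
        simp
end


lemma apg_zero_right {m : ℕ} (g : Vec m → Matrix (Fin m) (Fin m) ℝ) (x v : Vec m) :
    apg g x v 0 = 0 := by
  unfold apg; rw [Matrix.mulVec_zero, dotProduct_zero]


/-- commutator decomposition: Let `(N, G)` be a Lorentzian manifold
(chart `ℝ^{n+1}`) with Killing fields `Y`, `Z`, and let `U = {x⁰ = 0}` be a spacelike slice
with future unit normal `nv`.  Writing `Y = 2f_Y·nv + X_Y` and `Z = 2f_Z·nv + X_Z` along `U`
with `X_Y, X_Z` tangential, the commutator `W = [Y, Z]` decomposes along `U` as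
`W = 2f·nv + X` with `f = X_Y(f_Z) − X_Z(f_Y)` and
`X = [X_Y, X_Z] + 4(f_Y ∇f_Z − f_Z ∇f_Y)`, `∇` being the gradient of the induced metric. -/
theorem killing_commutator_lapse_shift_decomposition (n : ℕ) (hn : 2 ≤ n)
    (G : Vec (n + 1) → Matrix (Fin (n + 1)) (Fin (n + 1)) ℝ)
    (hGsm : ∀ μ ν, ContDiff ℝ 2 (fun x => G x μ ν)) (hGsym : ∀ x, (G x).IsSymm)
    (Y Z : Vec (n + 1) → Vec (n + 1)) (hYsm : ContDiff ℝ 2 Y) (hZsm : ContDiff ℝ 2 Z)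
    (hKillY : ∀ x, ∀ μ ν, lieD Y G x μ ν = 0)
    (hKillZ : ∀ x, ∀ μ ν, lieD Z G x μ ν = 0)
    (nv : Vec (n + 1) → Vec (n + 1)) (hnvsm : ContDiff ℝ 1 nv)
    (hunit : ∀ y : Vec n, apg G (emb y) (nv (emb y)) (nv (emb y)) = -1)
    (hnormal : ∀ y : Vec n, ∀ i : Fin n,
      apg G (emb y) (nv (emb y)) (embV (Pi.single i 1)) = 0)
    (hfuture : ∀ y : Vec n, 0 < nv (emb y) 0)
    (hspacelike : ∀ y : Vec n, (indMetric G y).PosDef)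
    (fY fZ : Vec n → ℝ) (XY XZ : Vec n → Vec n)
    (hfYsm : ContDiff ℝ 1 fY) (hfZsm : ContDiff ℝ 1 fZ)
    (hXYsm : ContDiff ℝ 1 XY) (hXZsm : ContDiff ℝ 1 XZ)
    (hdecompY : ∀ y : Vec n, Y (emb y) = (2 * fY y) • nv (emb y) + embV (XY y))
    (hdecompZ : ∀ y : Vec n, Z (emb y) = (2 * fZ y) • nv (emb y) + embV (XZ y)) :
    ∀ y : Vec n,
      lieBkt Y Z (emb y)
        = (2 * (fderiv ℝ fZ y (XY y) - fderiv ℝ fY y (XZ y))) • nv (emb y)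
          + embV (lieBkt XY XZ y
              + (4 * fY y) • gradSlice G fZ y - (4 * fZ y) • gradSlice G fY y) := by
  intro y
  -- differentiability
  have hgd : ∀ μ ν, DifferentiableAt ℝ (fun x => G x μ ν) (emb y) :=
    fun μ ν => ((hGsm μ ν).differentiable (by norm_num)).differentiableAt
  have hZd : DifferentiableAt ℝ Z (emb y) := (hZsm.differentiable (by norm_num)).differentiableAt
  have hYd : DifferentiableAt ℝ Y (emb y) := (hYsm.differentiable (by norm_num)).differentiableAt
  have hnvd : DifferentiableAt ℝ nv (emb y) :=
    (hnvsm.differentiable one_ne_zero).differentiableAt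
  have hfZd : DifferentiableAt ℝ fZ y := (hfZsm.differentiable one_ne_zero).differentiableAt
  have hfYd : DifferentiableAt ℝ fY y := (hfYsm.differentiable one_ne_zero).differentiableAt
  have hXYd : DifferentiableAt ℝ XY y := (hXYsm.differentiable one_ne_zero).differentiableAt
  have hXZd : DifferentiableAt ℝ XZ y := (hXZsm.differentiable one_ne_zero).differentiableAt
  have hembH : HasFDerivAt emb ((embCLM n) : Vec n →L[ℝ] Vec (n + 1)) y :=
    (embCLM n).hasFDerivAt
  have hembd : DifferentiableAt ℝ emb y := hembH.differentiableAt
  have hnvembH : HasFDerivAt (fun z => nv (emb z))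
      ((fderiv ℝ nv (emb y)).comp (embCLM n)) y :=
    hnvd.hasFDerivAt.comp y (embCLM n).hasFDerivAt
  have hnvembd : DifferentiableAt ℝ (fun z => nv (emb z)) y := hnvembH.differentiableAt
  have hembXZH : HasFDerivAt (fun z => embV (XZ z)) ((embCLM n).comp (fderiv ℝ XZ y)) y :=
    (embCLM n).hasFDerivAt.comp y hXZd.hasFDerivAt
  have hembXYH : HasFDerivAt (fun z => embV (XY z)) ((embCLM n).comp (fderiv ℝ XY y)) y :=
    (embCLM n).hasFDerivAt.comp y hXYd.hasFDerivAt
  -- slice derivative fact for Z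
  have hF2Z : ∀ v : Vec n, fderiv ℝ Z (emb y) (embV v)
      = (2 * fderiv ℝ fZ y v) • nv (emb y)
        + (2 * fZ y) • fderiv ℝ nv (emb y) (embV v) + embV (fderiv ℝ XZ y v) := by
    intro v
    have hL : HasFDerivAt (fun z => Z (emb z)) ((fderiv ℝ Z (emb y)).comp (embCLM n)) y :=
      hZd.hasFDerivAt.comp y (embCLM n).hasFDerivAt
    have hR : HasFDerivAt (fun z => (2 * fZ z) • nv (emb z) + embV (XZ z))
        (((2 * fZ y) • ((fderiv ℝ nv (emb y)).comp (embCLM n))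
           + ((2 : ℝ) • fderiv ℝ fZ y).smulRight (nv (emb y)))
          + (embCLM n).comp (fderiv ℝ XZ y)) y :=
      ((hfZd.hasFDerivAt.const_mul 2).smul hnvembH).add hembXZH
    have hLR : (fun z => Z (emb z)) = fun z => (2 * fZ z) • nv (emb z) + embV (XZ z) :=
      funext hdecompZ
    rw [hLR] at hL
    have heq := hL.unique hR
    have happ := congrArg (fun (L : Vec n →L[ℝ] Vec (n + 1)) => L v) heq
    simp only [ContinuousLinearMap.coe_comp', Function.comp_apply,
      ContinuousLinearMap.add_apply, ContinuousLinearMap.smul_apply,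
      ContinuousLinearMap.smulRight_apply, ContinuousLinearMap.coe_smul', Pi.smul_apply,
      smul_eq_mul] at happ
    simp only [embCLM_apply] at happ
    rw [happ]
    abel
  have hF2Y : ∀ v : Vec n, fderiv ℝ Y (emb y) (embV v)
      = (2 * fderiv ℝ fY y v) • nv (emb y)
        + (2 * fY y) • fderiv ℝ nv (emb y) (embV v) + embV (fderiv ℝ XY y v) := by
    intro v
    have hL : HasFDerivAt (fun z => Y (emb z)) ((fderiv ℝ Y (emb y)).comp (embCLM n)) y :=
      hYd.hasFDerivAt.comp y (embCLM n).hasFDerivAt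
    have hR : HasFDerivAt (fun z => (2 * fY z) • nv (emb z) + embV (XY z))
        (((2 * fY y) • ((fderiv ℝ nv (emb y)).comp (embCLM n))
           + ((2 : ℝ) • fderiv ℝ fY y).smulRight (nv (emb y)))
          + (embCLM n).comp (fderiv ℝ XY y)) y :=
      ((hfYd.hasFDerivAt.const_mul 2).smul hnvembH).add hembXYH
    have hLR : (fun z => Y (emb z)) = fun z => (2 * fY z) • nv (emb z) + embV (XY z) :=
      funext hdecompY
    rw [hLR] at hL
    have heq := hL.unique hR
    have happ := congrArg (fun (L : Vec n →L[ℝ] Vec (n + 1)) => L v) heq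
    simp only [ContinuousLinearMap.coe_comp', Function.comp_apply,
      ContinuousLinearMap.add_apply, ContinuousLinearMap.smul_apply,
      ContinuousLinearMap.smulRight_apply, ContinuousLinearMap.coe_smul', Pi.smul_apply,
      smul_eq_mul] at happ
    simp only [embCLM_apply] at happ
    rw [happ]
    abel
  -- derivative of the unit-normal condition along the slice
  have hF3 : ∀ w : Vec n,
      fderiv ℝ (fun x' => apg G x' (nv (emb y)) (nv (emb y))) (emb y) (embV w)
        + 2 * apg G (emb y) (fderiv ℝ nv (emb y) (embV w)) (nv (emb y)) = 0 := by
    intro w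
    have hcomp := fderiv_apg_comp G emb (fun z => nv (emb z)) (fun z => nv (emb z)) y hgd
      hembd hnvembd hnvembd w
    have hzero : fderiv ℝ (fun z => apg G (emb z) (nv (emb z)) (nv (emb z))) y = 0 := by
      have e : (fun z => apg G (emb z) (nv (emb z)) (nv (emb z))) = fun _ => (-1 : ℝ) :=
        funext hunit
      rw [e]; exact fderiv_const_apply _
    rw [hzero, hnvembH.fderiv, hembH.fderiv] at hcomp
    simp only [ContinuousLinearMap.zero_apply, ContinuousLinearMap.coe_comp',
      Function.comp_apply, embCLM_apply] at hcomp
    rw [apg_symm G (emb y) (hGsym (emb y)) (nv (emb y))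
      (fderiv ℝ nv (emb y) (embV w))] at hcomp
    linarith
  -- derivative of orthogonality with a constant tangential vector
  have hF6 : ∀ (t w : Vec n),
      fderiv ℝ (fun x' => apg G x' (nv (emb y)) (embV t)) (emb y) (embV w)
        + apg G (emb y) (fderiv ℝ nv (emb y) (embV w)) (embV t) = 0 := by
    intro t w
    have hcomp := fderiv_apg_comp G emb (fun z => nv (emb z)) (fun _ => embV t) y hgd
      hembd hnvembd (differentiableAt_const _) w
    have hzero : fderiv ℝ (fun z => apg G (emb z) (nv (emb z)) (embV t)) y = 0 := by
      have e : (fun z => apg G (emb z) (nv (emb z)) (embV t)) = fun _ => (0 : ℝ) :=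
        funext fun z => normal_ext G nv z (hnormal z) t
      rw [e]; exact fderiv_const_apply _
    rw [hzero, hnvembH.fderiv, hembH.fderiv, fderiv_fun_const] at hcomp
    simp only [ContinuousLinearMap.zero_apply, ContinuousLinearMap.coe_comp',
      Function.comp_apply, embCLM_apply, Pi.zero_apply, apg_zero_right, add_zero] at hcomp
    linarith
  -- derivative of orthogonality with the shift vectors
  have hF5Z : ∀ w : Vec n,
      fderiv ℝ (fun x' => apg G x' (nv (emb y)) (embV (XZ y))) (emb y) (embV w)
        + apg G (emb y) (fderiv ℝ nv (emb y) (embV w)) (embV (XZ y))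
        + apg G (emb y) (nv (emb y)) (embV (fderiv ℝ XZ y w)) = 0 := by
    intro w
    have hcomp := fderiv_apg_comp G emb (fun z => nv (emb z)) (fun z => embV (XZ z)) y hgd
      hembd hnvembd hembXZH.differentiableAt w
    have hzero : fderiv ℝ (fun z => apg G (emb z) (nv (emb z)) (embV (XZ z))) y = 0 := by
      have e : (fun z => apg G (emb z) (nv (emb z)) (embV (XZ z))) = fun _ => (0 : ℝ) :=
        funext fun z => normal_ext G nv z (hnormal z) (XZ z)
      rw [e]; exact fderiv_const_apply _
    rw [hzero, hnvembH.fderiv, hembH.fderiv, hembXZH.fderiv] at hcomp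
    simp only [ContinuousLinearMap.zero_apply, ContinuousLinearMap.coe_comp',
      Function.comp_apply, embCLM_apply, Pi.zero_apply] at hcomp
    linarith
  have hF5Y : ∀ w : Vec n,
      fderiv ℝ (fun x' => apg G x' (nv (emb y)) (embV (XY y))) (emb y) (embV w)
        + apg G (emb y) (fderiv ℝ nv (emb y) (embV w)) (embV (XY y))
        + apg G (emb y) (nv (emb y)) (embV (fderiv ℝ XY y w)) = 0 := by
    intro w
    have hcomp := fderiv_apg_comp G emb (fun z => nv (emb z)) (fun z => embV (XY z)) y hgd
      hembd hnvembd hembXYH.differentiableAt w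
    have hzero : fderiv ℝ (fun z => apg G (emb z) (nv (emb z)) (embV (XY z))) y = 0 := by
      have e : (fun z => apg G (emb z) (nv (emb z)) (embV (XY z))) = fun _ => (0 : ℝ) :=
        funext fun z => normal_ext G nv z (hnormal z) (XY z)
      rw [e]; exact fderiv_const_apply _
    rw [hzero, hnvembH.fderiv, hembH.fderiv, hembXYH.fderiv] at hcomp
    simp only [ContinuousLinearMap.zero_apply, ContinuousLinearMap.coe_comp',
      Function.comp_apply, embCLM_apply, Pi.zero_apply] at hcomp
    linarith
  have hnorm' : ∀ w, apg G (emb y) (nv (emb y)) (embV w) = 0 := normal_ext G nv y (hnormal y)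
  have expand : lieBkt Y Z (emb y)
      = (2 * (fderiv ℝ fZ y (XY y) - fderiv ℝ fY y (XZ y))) • nv (emb y)
        + embV (lieBkt XY XZ y)
        + ((2 * fY y) • fderiv ℝ Z (emb y) (nv (emb y))
           - (2 * fZ y) • fderiv ℝ Y (emb y) (nv (emb y))
           + (2 * fZ y) • fderiv ℝ nv (emb y) (embV (XY y))
           - (2 * fY y) • fderiv ℝ nv (emb y) (embV (XZ y))) := by
    show fderiv ℝ Z (emb y) (Y (emb y)) - fderiv ℝ Y (emb y) (Z (emb y)) = _
    rw [hdecompY y, hdecompZ y, map_add, map_add, map_smul, map_smul,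
      hF2Z (XY y), hF2Y (XZ y)]
    have hlb : lieBkt XY XZ y = fderiv ℝ XZ y (XY y) - fderiv ℝ XY y (XZ y) := rfl
    rw [hlb, embV_sub]
    module
  have hVE : ((2 * fY y) • fderiv ℝ Z (emb y) (nv (emb y))
           - (2 * fZ y) • fderiv ℝ Y (emb y) (nv (emb y))
           + (2 * fZ y) • fderiv ℝ nv (emb y) (embV (XY y))
           - (2 * fY y) • fderiv ℝ nv (emb y) (embV (XZ y)))
      = embV ((4 * fY y) • gradSlice G fZ y) - embV ((4 * fZ y) • gradSlice G fY y) := by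
    refine sub_eq_zero.mp (nondeg G y (hGsym (emb y)) (nv (emb y)) (hunit y) hnorm'
      (hfuture y).ne' (hspacelike y) _ ?_ ?_)
    · -- pairing with the normal
      have hE1 : apg G (emb y) (embV ((4 * fY y) • gradSlice G fZ y)) (nv (emb y)) = 0 := by
        rw [apg_symm G (emb y) (hGsym (emb y))]; exact hnorm' _
      have hE2 : apg G (emb y) (embV ((4 * fZ y) • gradSlice G fY y)) (nv (emb y)) = 0 := by
        rw [apg_symm G (emb y) (hGsym (emb y))]; exact hnorm' _
      have k1 := killing_contract G (emb y) Z hgd (hKillZ (emb y)) (nv (emb y)) (nv (emb y))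
      have k2 := killing_contract G (emb y) Y hgd (hKillY (emb y)) (nv (emb y)) (nv (emb y))
      rw [apg_symm G (emb y) (hGsym (emb y)) (nv (emb y))
        (fderiv ℝ Z (emb y) (nv (emb y)))] at k1
      rw [apg_symm G (emb y) (hGsym (emb y)) (nv (emb y))
        (fderiv ℝ Y (emb y) (nv (emb y)))] at k2
      rw [hdecompZ y, map_add, map_smul] at k1
      rw [hdecompY y, map_add, map_smul] at k2
      simp only [smul_eq_mul] at k1 k2
      have k3 := hF3 (XY y)
      have k4 := hF3 (XZ y)
      simp only [apg_sub_left, apg_add_left, apg_smul_left]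
      linear_combination (fY y) * k1 - (fZ y) * k2 + (fZ y) * k3 - (fY y) * k4 - hE1 + hE2
    · -- pairing with tangential basis vectors
      intro i
      have hE1 : apg G (emb y) (embV ((4 * fY y) • gradSlice G fZ y)) (embV (ebasis i))
          = (4 * fY y) * fderiv ℝ fZ y (ebasis i) := by
        rw [embV_smul, apg_smul_left, grad_pair G y (hGsym (emb y)) (hspacelike y) fZ i]
      have hE2 : apg G (emb y) (embV ((4 * fZ y) • gradSlice G fY y)) (embV (ebasis i))
          = (4 * fZ y) * fderiv ℝ fY y (ebasis i) := by
        rw [embV_smul, apg_smul_left, grad_pair G y (hGsym (emb y)) (hspacelike y) fY i]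
      have m1 := killing_contract G (emb y) Z hgd (hKillZ (emb y)) (nv (emb y))
        (embV (ebasis i))
      have m2 := killing_contract G (emb y) Y hgd (hKillY (emb y)) (nv (emb y))
        (embV (ebasis i))
      rw [hdecompZ y, map_add, map_smul, hF2Z (ebasis i)] at m1
      rw [hdecompY y, map_add, map_smul, hF2Y (ebasis i)] at m2
      simp only [apg_add_right, apg_smul_right, hunit y, smul_eq_mul] at m1 m2
      rw [apg_symm G (emb y) (hGsym (emb y)) (nv (emb y))
        (fderiv ℝ nv (emb y) (embV (ebasis i)))] at m1
      rw [apg_symm G (emb y) (hGsym (emb y)) (nv (emb y))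
        (fderiv ℝ nv (emb y) (embV (ebasis i)))] at m2
      have m5Z := hF5Z (ebasis i)
      have m5Y := hF5Y (ebasis i)
      have m6Z := hF6 (XZ y) (ebasis i)
      have m6Y := hF6 (XY y) (ebasis i)
      have m7Z := hF6 (ebasis i) (XZ y)
      have m7Y := hF6 (ebasis i) (XY y)
      simp only [apg_sub_left, apg_add_left, apg_smul_left]
      linear_combination (2 * fY y) * m1 - (2 * fZ y) * m2 - (2 * fY y) * m7Z
        + (2 * fZ y) * m7Y - (2 * fY y) * m5Z + (2 * fY y) * m6Z
        + (2 * fZ y) * m5Y - (2 * fZ y) * m6Y + hE2 - hE1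
  rw [expand, hVE, embV_sub, embV_add]
  abel

end
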